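/- Tr(ρ_λ·[σ̂^z, Jσ̂^z]) = 2i·(|λ|²/μ²)·tanh(βμ). In particular, if λ ≠ 0 satisfies the gap equation tanh(βμ) = 2μ, then Tr(ρ_λ·[σ̂^z, Jσ̂^z]) = 4i·|λ|²/μ (the symplectic form σ_λ(σ̂^z, Jσ̂^z) = −i·Tr(ρ_λ·[σ̂^z, Jσ̂^z]) equals 4|λ|²/μ, expressing the bosonic character of the fluctuations of the pair). -/

import Mathlib

open Matrix

/-- Matrix exponential on 2×2 complex matrices. -/
noncomputable def mexp (A : Matrix (Fin 2) (Fin 2) ℂ) : Matrix (Fin 2) (Fin 2) ℂ :=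
  NormedSpace.exp A

/-- Pauli matrix σ^z. -/
def σz : Matrix (Fin 2) (Fin 2) ℂ := !![1, 0; 0, -1]
/-- Pauli matrix σ^+. -/
def σp : Matrix (Fin 2) (Fin 2) ℂ := !![0, 1; 0, 0]
/-- Pauli matrix σ^-. -/
def σm : Matrix (Fin 2) (Fin 2) ℂ := !![0, 0; 1, 0]

/-- μ = √(ε² + |λ|²). -/
noncomputable def μBCS (ε : ℝ) (l : ℂ) : ℝ := Real.sqrt (ε ^ 2 + ‖l‖ ^ 2)

/-- One-site effective Hamiltonian h_λ = ε·σ^z − λ·σ^+ − (conj λ)·σ^-. -/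
noncomputable def hBCS (ε : ℝ) (l : ℂ) : Matrix (Fin 2) (Fin 2) ℂ :=
  (ε : ℂ) • σz - l • σp - (starRingEnd ℂ l) • σm

/-- One-site Gibbs density matrix ρ_λ = exp(−β h_λ)/Tr exp(−β h_λ). -/
noncomputable def ρBCS (ε β : ℝ) (l : ℂ) : Matrix (Fin 2) (Fin 2) ℂ :=
  (Matrix.trace (mexp (-(β : ℂ) • hBCS ε l)))⁻¹ • mexp (-(β : ℂ) • hBCS ε l)

/-- Spectral projection P₊ = (1/2)(1 + h_λ/μ). -/
noncomputable def Pplus (ε : ℝ) (l : ℂ) : Matrix (Fin 2) (Fin 2) ℂ :=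
  (1 / 2 : ℂ) • (1 + (μBCS ε l : ℂ)⁻¹ • hBCS ε l)

/-- Spectral projection P₋ = (1/2)(1 − h_λ/μ). -/
noncomputable def Pminus (ε : ℝ) (l : ℂ) : Matrix (Fin 2) (Fin 2) ℂ :=
  (1 / 2 : ℂ) • (1 - (μBCS ε l : ℂ)⁻¹ • hBCS ε l)

/-- E₋(A) = P₋·A·P₊. -/
noncomputable def Eminus (ε : ℝ) (l : ℂ) (A : Matrix (Fin 2) (Fin 2) ℂ) :
    Matrix (Fin 2) (Fin 2) ℂ := Pminus ε l * A * Pplus ε l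

/-- E₀(A) = P₋·A·P₋ + P₊·A·P₊. -/
noncomputable def Ezero (ε : ℝ) (l : ℂ) (A : Matrix (Fin 2) (Fin 2) ℂ) :
    Matrix (Fin 2) (Fin 2) ℂ := Pminus ε l * A * Pminus ε l + Pplus ε l * A * Pplus ε l

/-- E₊(A) = P₊·A·P₋. -/
noncomputable def Eplus (ε : ℝ) (l : ℂ) (A : Matrix (Fin 2) (Fin 2) ℂ) :
    Matrix (Fin 2) (Fin 2) ℂ := Pplus ε l * A * Pminus ε l

/-- The complex structure map J(A) = i·(E₊(A) − E₋(A)). -/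
noncomputable def Jmap (ε : ℝ) (l : ℂ) (A : Matrix (Fin 2) (Fin 2) ℂ) :
    Matrix (Fin 2) (Fin 2) ℂ := Complex.I • (Eplus ε l A - Eminus ε l A)

/-- Reduced symmetry generator σ̂^z = (E₊ + E₋)(σ^z). -/
noncomputable def σhat (ε : ℝ) (l : ℂ) : Matrix (Fin 2) (Fin 2) ℂ :=
  Eplus ε l σz + Eminus ε l σz

/-- Canonical order parameter Jσ̂^z = i·(E₊ − E₋)(σ^z). -/
noncomputable def Jσhat (ε : ℝ) (l : ℂ) : Matrix (Fin 2) (Fin 2) ℂ :=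
  Jmap ε l σz

/- ## Auxiliary lemmas -/

lemma hBCS_eq (ε : ℝ) (l : ℂ) :
    hBCS ε l = !![(ε : ℂ), -l; -(starRingEnd ℂ l), -(ε : ℂ)] := by
  ext i j
  fin_cases i <;> fin_cases j <;> simp [hBCS, σz, σp, σm]

lemma mu_sq (ε : ℝ) (l : ℂ) (hε : 0 < ε) :
    ((μBCS ε l : ℝ) : ℂ) ^ 2 = (ε : ℂ) ^ 2 + ((‖l‖ : ℝ) : ℂ) ^ 2 := by
  have h : (μBCS ε l) ^ 2 = ε ^ 2 + ‖l‖ ^ 2 :=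
    Real.sq_sqrt (by positivity)
  rw [← Complex.ofReal_pow, h]
  push_cast
  ring

lemma mu_pos (ε : ℝ) (l : ℂ) (hε : 0 < ε) : 0 < μBCS ε l :=
  Real.sqrt_pos.2 (by positivity)

lemma mulConjSelf (l : ℂ) : l * (starRingEnd ℂ l) = ((‖l‖ : ℝ) : ℂ) ^ 2 := by
  rw [Complex.mul_conj, ← Complex.sq_norm]
  push_cast
  ring

lemma exp_hBCS (ε β : ℝ) (hε : 0 < ε) (l : ℂ) :
    mexp (-(β : ℂ) • hBCS ε l) =
      ((Real.cosh (β * μBCS ε l) : ℝ) : ℂ) • (1 : Matrix (Fin 2) (Fin 2) ℂ) -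
      ((Real.sinh (β * μBCS ε l) / μBCS ε l : ℝ) : ℂ) • hBCS ε l := by
  set m := μBCS ε l with hmdef
  have hm : 0 < m := mu_pos ε l hε
  have hm0 : ((m : ℝ) : ℂ) ≠ 0 := by exact_mod_cast hm.ne'
  have hmsq : ((m : ℝ) : ℂ) ^ 2 = (ε : ℂ) ^ 2 + ((‖l‖ : ℝ) : ℂ) ^ 2 := mu_sq ε l hε
  have hk := mulConjSelf l
  set S : Matrix (Fin 2) (Fin 2) ℂ :=
    !![((ε : ℂ) + m), l; -(starRingEnd ℂ l), ((ε : ℂ) + m)] with hS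
  have hdet0 : IsUnit S.det := by
    have hdet : S.det = ((ε : ℂ) + m) ^ 2 + ((‖l‖ : ℝ) : ℂ) ^ 2 := by
      simp only [hS, Matrix.det_fin_two_of]
      linear_combination hk
    rw [hdet]
    refine isUnit_iff_ne_zero.2 ?_
    have h2 : ((ε : ℂ) + m) ^ 2 + ((‖l‖ : ℝ) : ℂ) ^ 2
        = (((ε + m) ^ 2 + ‖l‖ ^ 2 : ℝ) : ℂ) := by push_cast; ring
    rw [h2]
    exact_mod_cast (by positivity : ((ε + m) ^ 2 + ‖l‖ ^ 2 : ℝ) ≠ 0)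
  have hSU : IsUnit S := (Matrix.isUnit_iff_isUnit_det S).2 hdet0
  set D : Matrix (Fin 2) (Fin 2) ℂ :=
    Matrix.diagonal ![((m : ℝ) : ℂ), -(((m : ℝ)) : ℂ)] with hD
  have hDS : hBCS ε l * S = S * D := by
    rw [hBCS_eq]
    ext i j
    fin_cases i <;> fin_cases j <;>
      simp [hS, hD, Matrix.mul_apply, Fin.sum_univ_two, Matrix.diagonal] <;>
      first
        | ring1
        | linear_combination hk - hmsq
        | linear_combination hmsq - hk
        | linear_combination hk + hmsq
        | linear_combination (-1 : ℂ) * hk - hmsq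
  have hconj : -(β : ℂ) • hBCS ε l = S * (-(β : ℂ) • D) * S⁻¹ := by
    have h1 : hBCS ε l = S * D * S⁻¹ := by
      rw [← hDS, Matrix.mul_nonsing_inv_cancel_right _ _ hdet0]
    rw [h1, Matrix.mul_smul, Matrix.smul_mul]
  have hexpD : NormedSpace.exp (-(β : ℂ) • D) =
      Matrix.diagonal ![Complex.exp (-((β : ℂ) * m)), Complex.exp ((β : ℂ) * m)] := by
    have h3 : -(β : ℂ) • D = Matrix.diagonal ![(-((β : ℂ) * m)), (((β : ℂ) * m))] := by
      ext i j
      fin_cases i <;> fin_cases j <;> simp [hD, Matrix.diagonal] <;> ring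
    rw [h3, Matrix.exp_diagonal]
    have h4 : NormedSpace.exp ![-((β : ℂ) * m), ((β : ℂ) * m)]
        = ![Complex.exp (-((β : ℂ) * m)), Complex.exp ((β : ℂ) * m)] := by
      funext i
      fin_cases i <;> simp [Pi.coe_exp, ← Complex.exp_eq_exp_ℂ]
    rw [h4]
  have key : mexp (-(β : ℂ) • hBCS ε l) =
      S * Matrix.diagonal ![Complex.exp (-((β : ℂ) * m)), Complex.exp ((β : ℂ) * m)] * S⁻¹ := by
    rw [mexp, hconj, Matrix.exp_conj _ _ hSU, hexpD]
  have hcs₁ : ((Real.cosh (β * m) : ℝ) : ℂ) - ((Real.sinh (β * m) : ℝ) : ℂ)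
      = Complex.exp (-((β : ℂ) * m)) := by
    rw [Complex.ofReal_cosh, Complex.ofReal_sinh]
    push_cast
    exact Complex.cosh_sub_sinh _
  have hcs₂ : ((Real.cosh (β * m) : ℝ) : ℂ) + ((Real.sinh (β * m) : ℝ) : ℂ)
      = Complex.exp ((β : ℂ) * m) := by
    rw [Complex.ofReal_cosh, Complex.ofReal_sinh]
    push_cast
    exact Complex.cosh_add_sinh _
  set A : Matrix (Fin 2) (Fin 2) ℂ :=
    !![((ε : ℂ) + m), -l; -(starRingEnd ℂ l), -((ε : ℂ) + m)] with hA
  have hSD : S * D = ((m : ℝ) : ℂ) • A := by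
    ext i j
    fin_cases i <;> fin_cases j <;>
      simp [hS, hD, hA, Matrix.mul_apply, Fin.sum_univ_two, Matrix.diagonal] <;> ring
  have hfin : (((Real.cosh (β * m) : ℝ) : ℂ) • (1 : Matrix (Fin 2) (Fin 2) ℂ) -
      ((Real.sinh (β * m) / m : ℝ) : ℂ) • hBCS ε l) * S =
      S * Matrix.diagonal ![Complex.exp (-((β : ℂ) * m)), Complex.exp ((β : ℂ) * m)] := by
    rw [Matrix.sub_mul, Matrix.smul_mul, Matrix.smul_mul, one_mul, hDS, hSD, smul_smul]
    have hsm : ((Real.sinh (β * m) / m : ℝ) : ℂ) * ((m : ℝ) : ℂ)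
        = ((Real.sinh (β * m) : ℝ) : ℂ) := by
      push_cast
      field_simp
    rw [hsm]
    have hc1 : Complex.cosh ((β : ℂ) * m) - Complex.sinh ((β : ℂ) * m)
        = Complex.exp (-((β : ℂ) * m)) := Complex.cosh_sub_sinh _
    have hc2 : Complex.cosh ((β : ℂ) * m) + Complex.sinh ((β : ℂ) * m)
        = Complex.exp ((β : ℂ) * m) := Complex.cosh_add_sinh _
    ext i j
    fin_cases i <;> fin_cases j <;>
      simp [hS, hA, Matrix.mul_apply, Fin.sum_univ_two, Matrix.diagonal] <;>
      push_cast <;>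
      simp only [← hc1, ← hc2] <;>
      ring
  calc mexp (-(β : ℂ) • hBCS ε l)
      = S * Matrix.diagonal ![Complex.exp (-((β : ℂ) * m)), Complex.exp ((β : ℂ) * m)] * S⁻¹ := key
    _ = (((Real.cosh (β * m) : ℝ) : ℂ) • (1 : Matrix (Fin 2) (Fin 2) ℂ) -
        ((Real.sinh (β * m) / m : ℝ) : ℂ) • hBCS ε l) * S * S⁻¹ := by rw [hfin]
    _ = _ := Matrix.mul_nonsing_inv_cancel_right _ _ hdet0

set_option maxHeartbeats 1600000 in
/-- Tr(ρ_λ·[σ̂^z, Jσ̂^z]) = 2i·(|λ|²/μ²)·tanh(βμ); if λ ≠ 0 satisfies the gap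
equation tanh(βμ) = 2μ, then Tr(ρ_λ·[σ̂^z, Jσ̂^z]) = 4i·|λ|²/μ, i.e. the symplectic form
σ_λ(σ̂^z, Jσ̂^z) = −i·Tr(ρ_λ·[σ̂^z, Jσ̂^z]) equals 4|λ|²/μ. -/
theorem bcs_bosonic_commutator
    (ε β : ℝ) (hε : ε ∈ Set.Ioo (0 : ℝ) (1 / 2)) (hβ : 0 < β) (l : ℂ) :
    Matrix.trace (ρBCS ε β l * (σhat ε l * Jσhat ε l - Jσhat ε l * σhat ε l)) =
      2 * Complex.I * ((‖l‖ ^ 2 / μBCS ε l ^ 2 : ℝ) : ℂ) *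
        ((Real.tanh (β * μBCS ε l) : ℝ) : ℂ) ∧
    (l ≠ 0 → Real.tanh (β * μBCS ε l) = 2 * μBCS ε l →
      Matrix.trace (ρBCS ε β l * (σhat ε l * Jσhat ε l - Jσhat ε l * σhat ε l)) =
        4 * Complex.I * ((‖l‖ ^ 2 / μBCS ε l : ℝ) : ℂ) ∧
      -Complex.I *
          Matrix.trace (ρBCS ε β l * (σhat ε l * Jσhat ε l - Jσhat ε l * σhat ε l)) =
        ((4 * ‖l‖ ^ 2 / μBCS ε l : ℝ) : ℂ)) := by
  obtain ⟨hε0, -⟩ := hε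
  have hm : 0 < μBCS ε l := mu_pos ε l hε0
  set m := μBCS ε l with hmdef
  have hm0 : ((m : ℝ) : ℂ) ≠ 0 := by exact_mod_cast hm.ne'
  have hmsq : ((m : ℝ) : ℂ) ^ 2 = (ε : ℂ) ^ 2 + ((‖l‖ : ℝ) : ℂ) ^ 2 := mu_sq ε l hε0
  have hk := mulConjSelf l
  have hmsq' : ((m : ℝ) : ℂ) ^ 2 = (ε : ℂ) ^ 2 + l * (starRingEnd ℂ l) := by
    rw [hmsq, ← hk]
  set K := l * (starRingEnd ℂ l) with hKdef
  set Ap : Matrix (Fin 2) (Fin 2) ℂ :=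
    !![(m : ℂ) + ε, -l; -(starRingEnd ℂ l), (m : ℂ) - ε] with hApdef
  set Am : Matrix (Fin 2) (Fin 2) ℂ :=
    !![(m : ℂ) - ε, l; (starRingEnd ℂ l), (m : ℂ) + ε] with hAmdef
  have hAp : (2 * (m : ℂ)) • Pplus ε l = Ap := by
    rw [Pplus, hBCS_eq]
    ext i j
    fin_cases i <;> fin_cases j <;>
      simp [hApdef, Matrix.one_apply, ← hmdef] <;> field_simp <;> ring
  have hAm : (2 * (m : ℂ)) • Pminus ε l = Am := by
    rw [Pminus, hBCS_eq]
    ext i j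
    fin_cases i <;> fin_cases j <;>
      simp [hAmdef, Matrix.one_apply, ← hmdef] <;> field_simp <;> ring
  set M₁ : Matrix (Fin 2) (Fin 2) ℂ :=
    !![K, (ε : ℂ) * l; (ε : ℂ) * (starRingEnd ℂ l), -K] with hM₁def
  set M₂ : Matrix (Fin 2) (Fin 2) ℂ := !![0, l; -(starRingEnd ℂ l), 0] with hM₂def
  have hN₁ : Ap * σz * Am + Am * σz * Ap = (4 : ℂ) • M₁ := by
    ext i j
    fin_cases i <;> fin_cases j <;>
      simp [hApdef, hAmdef, hM₁def, hKdef, σz, Matrix.mul_apply, Fin.sum_univ_two] <;>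
      first
        | ring1
        | linear_combination (2 : ℂ) * hmsq'
        | linear_combination (-2 : ℂ) * hmsq'
  have hN₂ : Ap * σz * Am - Am * σz * Ap = ((4 : ℂ) * m) • M₂ := by
    ext i j
    fin_cases i <;> fin_cases j <;>
      simp [hApdef, hAmdef, hM₂def, σz, Matrix.mul_apply, Fin.sum_univ_two] <;>
      ring
  have hexpand : ∀ P Q : Matrix (Fin 2) (Fin 2) ℂ,
      ((2 * (m : ℂ)) • P) * σz * ((2 * (m : ℂ)) • Q)
        = ((4 : ℂ) * (m : ℂ) ^ 2) • (P * σz * Q) := by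
    intro P Q
    rw [Matrix.smul_mul, Matrix.smul_mul, Matrix.mul_smul, smul_smul]
    congr 1
    ring
  have h4m0 : ((4 : ℂ) * (m : ℂ) ^ 2) ≠ 0 := by
    simp [hm0]
  have hσ2 : σhat ε l = ((m : ℂ) ^ 2)⁻¹ • M₁ := by
    have h1 : ((4 : ℂ) * (m : ℂ) ^ 2) • σhat ε l = (4 : ℂ) • M₁ := by
      rw [σhat, Eplus, Eminus, smul_add, ← hexpand, ← hexpand, hAp, hAm, hN₁]
    have h2 := congrArg (fun X => (((4 : ℂ) * (m : ℂ) ^ 2)⁻¹) • X) h1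
    simp only [smul_smul, inv_mul_cancel₀ h4m0, one_smul] at h2
    rw [h2]
    congr 1
    field_simp
  have hJ2 : Jσhat ε l = ((m : ℂ))⁻¹ • (Complex.I • M₂) := by
    have h1 : ((4 : ℂ) * (m : ℂ) ^ 2) • Jσhat ε l = Complex.I • (((4 : ℂ) * m) • M₂) := by
      rw [Jσhat, Jmap, Eplus, Eminus, smul_comm, smul_sub, ← hexpand, ← hexpand, hAp, hAm, hN₂]
    have h2 := congrArg (fun X => (((4 : ℂ) * (m : ℂ) ^ 2)⁻¹) • X) h1
    simp only [smul_smul, inv_mul_cancel₀ h4m0, one_smul] at h2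
    rw [h2, smul_smul]
    congr 1
    field_simp
  set D : Matrix (Fin 2) (Fin 2) ℂ :=
    !![-((ε : ℂ) * K), K * l; K * (starRingEnd ℂ l), (ε : ℂ) * K] with hDdef
  have hMM : M₁ * M₂ - M₂ * M₁ = (2 : ℂ) • D := by
    ext i j
    fin_cases i <;> fin_cases j <;>
      simp [hM₁def, hM₂def, hDdef, hKdef, Matrix.mul_apply, Fin.sum_univ_two] <;>
      ring
  have hP1 : M₁ * M₂ = !![-((ε : ℂ) * K), K * l; K * (starRingEnd ℂ l), (ε : ℂ) * K] := by
    ext i j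
    fin_cases i <;> fin_cases j <;>
      simp [hM₁def, hM₂def, hKdef, Matrix.mul_apply, Fin.sum_univ_two] <;> ring
  have hP2 : M₂ * M₁ = !![(ε : ℂ) * K, -(K * l); -(K * (starRingEnd ℂ l)), -((ε : ℂ) * K)] := by
    ext i j
    fin_cases i <;> fin_cases j <;>
      simp [hM₁def, hM₂def, hKdef, Matrix.mul_apply, Fin.sum_univ_two] <;> ring
  have hX : σhat ε l * Jσhat ε l - Jσhat ε l * σhat ε l
      = (2 * Complex.I * ((m : ℂ) ^ 3)⁻¹) • D := by
    rw [hσ2, hJ2]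
    simp only [Matrix.smul_mul, Matrix.mul_smul, smul_smul]
    rw [hP1, hP2]
    ext i j
    fin_cases i <;> fin_cases j <;>
      simp [hDdef] <;> field_simp <;> ring
  -- trace of the exponential
  have hE := exp_hBCS ε β hε0 l
  have htr : Matrix.trace (mexp (-(β : ℂ) • hBCS ε l))
      = 2 * ((Real.cosh (β * m) : ℝ) : ℂ) := by
    rw [hE, hBCS_eq]
    simp [Matrix.trace_fin_two]
    ring
  have hc0 : ((Real.cosh (β * m) : ℝ) : ℂ) ≠ 0 := by
    exact_mod_cast (Real.cosh_pos (x := β * m)).ne'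
  have htanh : ((Real.tanh (β * m) : ℝ) : ℂ)
      = ((Real.sinh (β * m) : ℝ) : ℂ) / ((Real.cosh (β * m) : ℝ) : ℂ) := by
    rw [Real.tanh_eq_sinh_div_cosh]
    push_cast
    ring
  have hmain : Matrix.trace (ρBCS ε β l * (σhat ε l * Jσhat ε l - Jσhat ε l * σhat ε l)) =
      2 * Complex.I * ((‖l‖ ^ 2 / m ^ 2 : ℝ) : ℂ) *
        ((Real.tanh (β * m) : ℝ) : ℂ) := by
    rw [ρBCS, Matrix.smul_mul, Matrix.trace_smul, htr, hX, hE, hBCS_eq, htanh]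
    simp only [Complex.ofReal_div]
    simp [Matrix.trace_fin_two, Matrix.mul_apply, Fin.sum_univ_two, Matrix.one_apply, hDdef,
      ← hmdef]
    have hcc0 : Complex.cosh ((β : ℂ) * (m : ℝ)) ≠ 0 := by
      rw [show Complex.cosh ((β : ℂ) * (m : ℝ)) = ((Real.cosh (β * m) : ℝ) : ℂ) by norm_cast]
      exact hc0
    field_simp [hm0, hcc0]
    ring_nf
    have hI12 : ((m : ℝ) : ℂ) ^ 12 * ((((m : ℝ) : ℂ))⁻¹) ^ 12 = 1 := by
      rw [← mul_pow, mul_inv_cancel₀ hm0, one_pow]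
    have hI2 : Complex.cosh ((β : ℂ) * (m : ℝ)) * (Complex.cosh ((β : ℂ) * (m : ℝ)))⁻¹ = 1 :=
      mul_inv_cancel₀ hcc0
    have hk2 : l * (starRingEnd ℂ l) = ((‖l‖ : ℝ) : ℂ) ^ 2 := mulConjSelf l
    have hmsq2 : ((m : ℝ) : ℂ) ^ 2 = (ε : ℂ) ^ 2 + l * (starRingEnd ℂ l) := by
      rw [hmsq, ← hk2]
    linear_combination
      (2 * Complex.sinh (((m : ℝ) : ℂ) * (β : ℂ)) * (ε : ℂ) ^ 2 +
        2 * Complex.sinh (((m : ℝ) : ℂ) * (β : ℂ)) * (l * (starRingEnd ℂ l))) * hk -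
      (2 * Complex.sinh (((m : ℝ) : ℂ) * (β : ℂ)) * ((‖l‖ : ℝ) : ℂ) ^ 2) * hmsq2
  refine ⟨hmain, fun hl hgap => ?_⟩
  have h4 : Matrix.trace (ρBCS ε β l * (σhat ε l * Jσhat ε l - Jσhat ε l * σhat ε l)) =
      4 * Complex.I * ((‖l‖ ^ 2 / m : ℝ) : ℂ) := by
    rw [hmain, hgap]
    push_cast
    field_simp
    ring
  refine ⟨h4, ?_⟩
  rw [h4]
  push_cast
  field_simp
  linear_combination (-((‖l‖ : ℝ) : ℂ) ^ 2) * Complex.I_sq
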